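/- Every distal action of a finitely generated infinite group on the Cantor space has the pseudo-orbit tracing property. -/

import Mathlib

/-- A continuous action of a group `G` on a topological space `X`. -/
def IsContAction {G X : Type*} [Group G] [TopologicalSpace X] (T : G → X → X) : Prop :=
  (∀ g, Continuous (T g)) ∧ (∀ x, T 1 x = x) ∧ ∀ g h x, T (g * h) x = T g (T h x)

/-- `{x_g}` is a `δ` pseudo-orbit of `T` with respect to the generating set `A`. -/
def IsPseudoOrbit {G X : Type*} [Group G] [MetricSpace X] (T : G → X → X) (A : Set G)
    (δ : ℝ) (x : G → X) : Prop :=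
  ∀ a ∈ A, ∀ g : G, dist (T a (x g)) (x (a * g)) < δ

/-- The point `y` `ε`-traces the pseudo-orbit `{x_g}`. -/
def Traces {G X : Type*} [Group G] [MetricSpace X] (T : G → X → X) (ε : ℝ)
    (x : G → X) (y : X) : Prop :=
  ∀ g : G, dist (T g y) (x g) < ε

/-- `T` has the pseudo-orbit tracing property with respect to the generating set `A`. -/
def POTPWrt {G X : Type*} [Group G] [MetricSpace X] (T : G → X → X) (A : Set G) : Prop :=
  ∀ ε > (0 : ℝ), ∃ δ > (0 : ℝ), ∀ x : G → X, IsPseudoOrbit T A δ x → ∃ y : X, Traces T ε x y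

/-- `T` is `A`-topologically stable. -/
def TopStableWrt {G X : Type*} [Group G] [MetricSpace X] (T : G → X → X) (A : Set G) : Prop :=
  ∀ ε > (0 : ℝ), ∃ δ > (0 : ℝ), ∀ S : G → X → X, IsContAction S →
    (∀ a ∈ A, ∀ x : X, dist (T a x) (S a x) < δ) →
    ∃ f : X → X, Continuous f ∧ (∀ g x, T g (f x) = f (S g x)) ∧ ∀ x, dist (f x) x ≤ ε

/-- `T` is expansive with expansive constant `c`. -/
def ExpansiveWith {G X : Type*} [Group G] [MetricSpace X] (T : G → X → X) (c : ℝ) : Prop :=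
  0 < c ∧ ∀ x y : X, x ≠ y → ∃ g : G, dist (T g x) (T g y) > c

namespace DistalPOTP

open Set Filter Topology Pointwise

/-! ### Word combinatorics for a finitely generated group -/

section Words

variable {G : Type*} [Group G]

/-- The symmetrized generating set together with `1`. -/
def S0 (A : Finset G) : Set G := insert 1 ((A : Set G) ∪ (A : Set G)⁻¹)

lemma one_mem_S0 (A : Finset G) : (1 : G) ∈ S0 A := Set.mem_insert _ _

lemma mem_S0_of_mem {A : Finset G} {a : G} (ha : a ∈ A) : a ∈ S0 A :=
  Set.mem_insert_of_mem _ (Or.inl ha)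

lemma inv_mem_S0 {A : Finset G} {s : G} (hs : s ∈ S0 A) : s⁻¹ ∈ S0 A := by
  rcases hs with rfl | hs | hs
  · simpa using one_mem_S0 A
  · exact Set.mem_insert_of_mem _ (Or.inr (by simpa using hs))
  · exact Set.mem_insert_of_mem _ (Or.inl (by simpa using hs))

lemma S0_finite (A : Finset G) : (S0 A).Finite :=
  ((A.finite_toSet).union (A.finite_toSet.inv)).insert 1

lemma one_mem_S0_pow (A : Finset G) : ∀ n, (1 : G) ∈ (S0 A) ^ n := by
  intro n
  induction n with
  | zero => simp
  | succ n ih =>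
    rw [pow_succ]
    simpa using Set.mul_mem_mul ih (one_mem_S0 A)

lemma S0_pow_finite (A : Finset G) : ∀ n, ((S0 A) ^ n).Finite := by
  intro n
  induction n with
  | zero => simpa using Set.finite_singleton (1 : G)
  | succ n ih =>
    rw [pow_succ]
    exact ih.mul (S0_finite A)

lemma S0_pow_mono (A : Finset G) {m n : ℕ} (h : m ≤ n) : (S0 A) ^ m ⊆ (S0 A) ^ n := by
  obtain ⟨k, rfl⟩ := Nat.exists_eq_add_of_le h
  intro g hg
  rw [pow_add]
  simpa using Set.mul_mem_mul hg (one_mem_S0_pow A k)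

lemma S0_inv_subset (A : Finset G) : (S0 A)⁻¹ ⊆ S0 A := by
  intro s hs
  rw [Set.mem_inv] at hs
  simpa using inv_mem_S0 hs

lemma S0_pow_inv_subset (A : Finset G) : ∀ n, ((S0 A) ^ n)⁻¹ ⊆ (S0 A) ^ n := by
  intro n
  induction n with
  | zero => simp
  | succ n ih =>
    intro x hx
    rw [pow_succ, mul_inv_rev] at hx
    rw [pow_succ']
    exact Set.mul_subset_mul (S0_inv_subset A) ih hx

lemma exists_S0_pow_mem {A : Finset G} (hAgen : Subgroup.closure (A : Set G) = ⊤) (g : G) :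
    ∃ n, g ∈ (S0 A) ^ n := by
  let K : Subgroup G :=
    { carrier := {g | ∃ n, g ∈ (S0 A) ^ n}
      one_mem' := ⟨0, by simp⟩
      mul_mem' := by
        rintro a b ⟨m, hm⟩ ⟨n, hn⟩
        exact ⟨m + n, by rw [pow_add]; exact Set.mul_mem_mul hm hn⟩
      inv_mem' := by
        rintro a ⟨n, hn⟩
        exact ⟨n, S0_pow_inv_subset A n (Set.inv_mem_inv.mpr hn)⟩ }
  have hA : (A : Set G) ⊆ K := by
    intro a ha
    exact ⟨1, by simpa using mem_S0_of_mem ha⟩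
  have : Subgroup.closure (A : Set G) ≤ K := Subgroup.closure_le K |>.mpr hA
  rw [hAgen] at this
  exact this (Subgroup.mem_top g)

lemma S0_decomp {A : Finset G} {g : G} {ℓ : ℕ} (hg : g ∈ (S0 A) ^ ℓ) :
    ∀ k, k ≤ ℓ → ∃ u ∈ (S0 A) ^ k, u * g ∈ (S0 A) ^ (ℓ - k) := by
  intro k
  induction k with
  | zero =>
    intro _
    exact ⟨1, by simp, by simpa using hg⟩
  | succ k ih =>
    intro hk
    obtain ⟨u, hu, hug⟩ := ih (Nat.le_of_succ_le hk)
    have heq : ℓ - k = (ℓ - (k + 1)) + 1 := by omega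
    rw [heq, pow_succ'] at hug
    obtain ⟨s, hs, t, ht, hst⟩ := hug
    refine ⟨s⁻¹ * u, ?_, ?_⟩
    · rw [pow_succ']
      exact Set.mul_mem_mul (inv_mem_S0 hs) hu
    · have : s⁻¹ * u * g = t := by
        rw [mul_assoc, ← hst, ← mul_assoc, inv_mul_cancel, one_mul]
      rw [this]
      exact ht

end Words

/-! ### Ellis semigroup and two-sided recurrence for distal actions -/

section Ellis

variable {G : Type*} [Group G] {Z : Type*} [MetricSpace Z] [CompactSpace Z]

/-- The Ellis (enveloping) semigroup of the action. -/
def Ell (Φ : G → Z → Z) : Set (Z → Z) := closure (Set.range Φ)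

lemma isClosed_Ell (Φ : G → Z → Z) : IsClosed (Ell Φ) := isClosed_closure

lemma isCompact_Ell (Φ : G → Z → Z) : IsCompact (Ell Φ) :=
  isClosed_closure.isCompact

lemma comp_mem_Ell {Φ : G → Z → Z} (hc : ∀ g, Continuous (Φ g))
    (hm : ∀ g h z, Φ (g * h) z = Φ g (Φ h z))
    {f h : Z → Z} (hf : f ∈ Ell Φ) (hh : h ∈ Ell Φ) : f ∘ h ∈ Ell Φ := by
  have step1 : ∀ g : G, ∀ k ∈ Ell Φ, Φ g ∘ k ∈ Ell Φ := by
    intro g k hk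
    have hcont : Continuous fun k : Z → Z => Φ g ∘ k :=
      continuous_pi fun x => (hc g).comp (continuous_apply x)
    have hmaps : Set.MapsTo (fun k : Z → Z => Φ g ∘ k) (Set.range Φ) (Ell Φ) := by
      rintro _ ⟨g', rfl⟩
      exact subset_closure ⟨g * g', funext fun z => hm g g' z⟩
    have := (hmaps.closure hcont) hk
    rwa [(isClosed_Ell Φ).closure_eq] at this
  have hcont2 : Continuous fun f : Z → Z => f ∘ h :=
    continuous_pi fun x => continuous_apply (h x)
  have hmaps2 : Set.MapsTo (fun f : Z → Z => f ∘ h) (Set.range Φ) (Ell Φ) := by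
    rintro _ ⟨g, rfl⟩
    exact step1 g h hh
  have := (hmaps2.closure hcont2) hf
  rwa [(isClosed_Ell Φ).closure_eq] at this

lemma apply_mem_orbitClosure {Φ : G → Z → Z} {f : Z → Z} (hf : f ∈ Ell Φ) (z : Z) :
    f z ∈ closure (Set.range fun g => Φ g z) := by
  have hmaps : Set.MapsTo (fun f : Z → Z => f z) (Set.range Φ)
      (Set.range fun g => Φ g z) := by
    rintro _ ⟨g, rfl⟩
    exact ⟨g, rfl⟩
  exact hmaps.closure (continuous_apply z) hf

lemma orbitClosure_subset_image (Φ : G → Z → Z) (z : Z) :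
    closure (Set.range fun g => Φ g z) ⊆ (fun f : Z → Z => f z) '' (Ell Φ) := by
  apply closure_minimal
  · rintro _ ⟨g, rfl⟩
    exact ⟨Φ g, subset_closure ⟨g, rfl⟩, rfl⟩
  · exact ((isCompact_Ell Φ).image (continuous_apply z)).isClosed

/-- Two-sided recurrence for distal actions: if `w` lies in the orbit closure of `z`, then
`z` lies in the orbit closure of `w`.  Proved via the Ellis semigroup. -/
theorem ap_lemma {Φ : G → Z → Z} (hc : ∀ g, Continuous (Φ g)) (h1 : ∀ z, Φ 1 z = z)
    (hm : ∀ g h z, Φ (g * h) z = Φ g (Φ h z))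
    (hd : ∀ z w : Z, (∀ ε > (0:ℝ), ∃ g, dist (Φ g z) (Φ g w) < ε) → z = w)
    {z w : Z} (hw : w ∈ closure (Set.range fun g => Φ g z)) :
    z ∈ closure (Set.range fun g => Φ g w) := by
  obtain ⟨f, hfE, hfz⟩ := orbitClosure_subset_image Φ z hw
  set C : Set (Z → Z) := (fun h : Z → Z => h ∘ f) '' Ell Φ with hCdef
  have hCsubE : C ⊆ Ell Φ := by
    rintro _ ⟨h, hh, rfl⟩
    exact comp_mem_Ell hc hm hh hfE
  have hCcomp : IsCompact C :=
    (isCompact_Ell Φ).image (continuous_pi fun x => continuous_apply (f x))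
  have hCne : C.Nonempty := ⟨Φ 1 ∘ f, Φ 1, subset_closure ⟨1, rfl⟩, rfl⟩
  have hCmul : ∀ a ∈ C, ∀ b ∈ C, a ∘ b ∈ C := by
    rintro _ ⟨a, ha, rfl⟩ _ ⟨b, hb, rfl⟩
    exact ⟨(a ∘ f) ∘ b, comp_mem_Ell hc hm (comp_mem_Ell hc hm ha hfE) hb, rfl⟩
  haveI : Nonempty C := hCne.to_subtype
  letI : Semigroup C :=
    { mul := fun a b => ⟨a.1 ∘ b.1, hCmul _ a.2 _ b.2⟩
      mul_assoc := fun a b c => Subtype.ext rfl }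
  haveI : CompactSpace C := isCompact_iff_compactSpace.mp hCcomp
  obtain ⟨e, he⟩ := exists_idempotent_of_compact_t2_of_continuous_mul_left
    (M := C) (fun r => by
      apply continuous_induced_rng.2
      show Continuous fun a : C => a.1 ∘ r.1
      exact continuous_pi fun x => (continuous_apply (r.1 x)).comp continuous_subtype_val)
  have heE : e.1 ∈ Ell Φ := hCsubE e.2
  have hee : ∀ x, e.1 (e.1 x) = e.1 x := by
    intro x
    have := congrArg Subtype.val he
    exact congrFun this x
  have heid : ∀ x, e.1 x = x := by
    intro x
    have hx : ∀ ε > (0:ℝ), ∃ g, dist (Φ g x) (Φ g (e.1 x)) < ε := by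
      intro ε hε
      set V : Set (Z → Z) :=
        {k | dist (k x) (e.1 x) < ε / 2 ∧ dist (k (e.1 x)) (e.1 x) < ε / 2} with hV
      have hVopen : IsOpen V := by
        apply IsOpen.inter
        · exact isOpen_lt ((continuous_apply x).dist continuous_const) continuous_const
        · exact isOpen_lt ((continuous_apply (e.1 x)).dist continuous_const) continuous_const
      have hVe : e.1 ∈ V := by
        constructor
        · simpa using half_pos hε
        · rw [hee x]
          simpa using half_pos hε
      have hmem := mem_closure_iff.mp heE V hVopen hVe
      obtain ⟨_, hkV, g, rfl⟩ := hmem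
      refine ⟨g, ?_⟩
      calc dist (Φ g x) (Φ g (e.1 x)) ≤
          dist (Φ g x) (e.1 x) + dist (e.1 x) (Φ g (e.1 x)) := dist_triangle _ _ _
        _ < ε / 2 + ε / 2 := by
            apply add_lt_add hkV.1
            rw [dist_comm]
            exact hkV.2
        _ = ε := add_halves ε
    exact (hd x (e.1 x) hx).symm
  obtain ⟨h', hh'E, hh'f⟩ := e.2
  have hh'f' : h' ∘ f = e.1 := hh'f
  have hz : h' w = z := by
    rw [← hfz]
    show h' (f z) = z
    have h3 : h' (f z) = (h' ∘ f) z := rfl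
    rw [h3, hh'f', heid z]
  rw [← hz]
  exact apply_mem_orbitClosure hh'E w

end Ellis

/-! ### Clopen partitions of small mesh -/

section Partition

variable {X : Type*} [MetricSpace X] [CompactSpace X] [TotallyDisconnectedSpace X]

/-- Disjointify a list of sets. -/
def disjointify : List (Set X) → List (Set X)
  | [] => []
  | K :: rest => K :: (disjointify rest).map (· \ K)

lemma disjointify_subset : ∀ l : List (Set X), ∀ D ∈ disjointify l, ∃ K ∈ l, D ⊆ K := by
  intro l
  induction l with
  | nil => intro D hD; simp [disjointify] at hD
  | cons K rest ih =>
    intro D hD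
    rcases List.mem_cons.mp hD with rfl | hD
    · exact ⟨D, List.mem_cons_self, subset_rfl⟩
    · obtain ⟨D', hD', rfl⟩ := List.mem_map.mp hD
      obtain ⟨K', hK', hsub⟩ := ih D' hD'
      exact ⟨K', List.mem_cons_of_mem _ hK', Set.diff_subset.trans hsub⟩

lemma disjointify_clopen : ∀ l : List (Set X), (∀ K ∈ l, IsClopen K) →
    ∀ D ∈ disjointify l, IsClopen D := by
  intro l
  induction l with
  | nil => intro _ D hD; simp [disjointify] at hD
  | cons K rest ih =>
    intro hl D hD
    rcases List.mem_cons.mp hD with rfl | hD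
    · exact hl D (List.mem_cons_self)
    · obtain ⟨D', hD', rfl⟩ := List.mem_map.mp hD
      exact (ih (fun K' hK' => hl K' (List.mem_cons_of_mem _ hK')) D' hD').diff
        (hl K (List.mem_cons_self))

lemma disjointify_cover : ∀ l : List (Set X), ∀ x : X, (∃ K ∈ l, x ∈ K) →
    ∃ D ∈ disjointify l, x ∈ D := by
  intro l
  induction l with
  | nil => rintro x ⟨K, hK, _⟩; simp at hK
  | cons K rest ih =>
    rintro x ⟨K₀, hK₀, hxK₀⟩
    by_cases hxK : x ∈ K
    · exact ⟨K, List.mem_cons_self, hxK⟩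
    · rcases List.mem_cons.mp hK₀ with rfl | hK₀
      · exact absurd hxK₀ hxK
      · obtain ⟨D', hD', hxD'⟩ := ih x ⟨K₀, hK₀, hxK₀⟩
        exact ⟨D' \ K, List.mem_cons_of_mem _ (List.mem_map.mpr ⟨D', hD', rfl⟩), hxD', hxK⟩

lemma disjointify_disjoint : ∀ l : List (Set X), ∀ D ∈ disjointify l, ∀ D' ∈ disjointify l,
    ∀ x : X, x ∈ D → x ∈ D' → D = D' := by
  intro l
  induction l with
  | nil => intro D hD; simp [disjointify] at hD
  | cons K rest ih =>
    intro D hD D' hD' x hxD hxD'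
    rcases List.mem_cons.mp hD with rfl | hD <;> rcases List.mem_cons.mp hD' with h' | h'
    · exact h'.symm ▸ rfl
    · obtain ⟨E, hE, rfl⟩ := List.mem_map.mp h'
      exact absurd hxD hxD'.2
    · obtain ⟨E, hE, rfl⟩ := List.mem_map.mp hD
      subst h'
      exact absurd hxD' hxD.2
    · obtain ⟨E, hE, rfl⟩ := List.mem_map.mp hD
      obtain ⟨E', hE', rfl⟩ := List.mem_map.mp h'
      rw [ih E hE E' hE' x hxD.1 hxD'.1]

lemma isClopen_pairs : ∀ l : List (Set X), (∀ D ∈ l, IsClopen D) →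
    IsClopen {p : X × X | ∃ D ∈ l, p.1 ∈ D ∧ p.2 ∈ D} := by
  intro l
  induction l with
  | nil =>
    intro _
    have : {p : X × X | ∃ D ∈ ([] : List (Set X)), p.1 ∈ D ∧ p.2 ∈ D} = ∅ := by
      ext p; simp
    rw [this]
    exact isClopen_empty
  | cons K rest ih =>
    intro hl
    have : {p : X × X | ∃ D ∈ K :: rest, p.1 ∈ D ∧ p.2 ∈ D} =
        (K ×ˢ K) ∪ {p : X × X | ∃ D ∈ rest, p.1 ∈ D ∧ p.2 ∈ D} := by
      ext p
      simp only [Set.mem_setOf_eq, List.mem_cons, Set.mem_union, Set.mem_prod]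
      constructor
      · rintro ⟨D, rfl | hD, h⟩
        · exact Or.inl h
        · exact Or.inr ⟨D, hD, h⟩
      · rintro (h | ⟨D, hD, h⟩)
        · exact ⟨K, Or.inl rfl, h⟩
        · exact ⟨D, Or.inr hD, h⟩
    rw [this]
    exact ((hl K (List.mem_cons_self)).prod (hl K (List.mem_cons_self))).union
      (ih fun D hD => hl D (List.mem_cons_of_mem _ hD))

/-- In a compact totally disconnected metric space there is a clopen equivalence relation
with classes of diameter less than `ε`. -/
lemma exists_clopen_equiv (ε : ℝ) (hε : 0 < ε) :
    ∃ E : X → X → Prop, Equivalence E ∧ IsClopen {p : X × X | E p.1 p.2} ∧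
      ∀ x y : X, E x y → dist x y < ε := by
  have hhalf : 0 < ε / 2 := half_pos hε
  have hcl : ∀ x : X, ∃ V : Set X, IsClopen V ∧ x ∈ V ∧ V ⊆ Metric.ball x (ε / 2) :=
    fun x => compact_exists_isClopen_in_isOpen Metric.isOpen_ball (Metric.mem_ball_self hhalf)
  choose V hVclopen hVmem hVsub using hcl
  obtain ⟨t, ht⟩ := IsCompact.elim_finite_subcover isCompact_univ V
    (fun x => (hVclopen x).isOpen) (fun x _ => Set.mem_iUnion.mpr ⟨x, hVmem x⟩)
  set l : List (Set X) := t.toList.map V with hl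
  have hlclopen : ∀ K ∈ l, IsClopen K := by
    intro K hK
    obtain ⟨x₀, _, rfl⟩ := List.mem_map.mp hK
    exact hVclopen x₀
  refine ⟨fun x y => ∃ D ∈ disjointify l, x ∈ D ∧ y ∈ D, ⟨?_, ?_, ?_⟩, ?_, ?_⟩
  · -- refl
    intro x
    have hx : ∃ K ∈ l, x ∈ K := by
      have := ht (Set.mem_univ x)
      obtain ⟨x₀, hx₀⟩ := Set.mem_iUnion.mp this
      obtain ⟨hx₀t, hxV⟩ := Set.mem_iUnion.mp hx₀
      exact ⟨V x₀, List.mem_map.mpr ⟨x₀, Finset.mem_toList.mpr hx₀t, rfl⟩, hxV⟩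
    obtain ⟨D, hD, hxD⟩ := disjointify_cover l x hx
    exact ⟨D, hD, hxD, hxD⟩
  · -- symm
    rintro x y ⟨D, hD, hx, hy⟩
    exact ⟨D, hD, hy, hx⟩
  · -- trans
    rintro x y z ⟨D, hD, hx, hy⟩ ⟨D', hD', hy', hz⟩
    have := disjointify_disjoint l D hD D' hD' y hy hy'
    exact ⟨D, hD, hx, this ▸ hz⟩
  · -- clopen
    have : {p : X × X | ∃ D ∈ disjointify l, p.1 ∈ D ∧ p.2 ∈ D} =
        {p : X × X | ∃ D ∈ disjointify l, p.1 ∈ D ∧ p.2 ∈ D} := rfl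
    exact isClopen_pairs (disjointify l) (disjointify_clopen l hlclopen)
  · -- small diameter
    rintro x y ⟨D, hD, hx, hy⟩
    obtain ⟨K, hK, hsub⟩ := disjointify_subset l D hD
    obtain ⟨x₀, _, rfl⟩ := List.mem_map.mp hK
    have h1 : dist x x₀ < ε / 2 := Metric.mem_ball.mp (hVsub x₀ (hsub hx))
    have h2 : dist y x₀ < ε / 2 := Metric.mem_ball.mp (hVsub x₀ (hsub hy))
    calc dist x y ≤ dist x x₀ + dist y x₀ := dist_triangle_right _ _ _
      _ < ε / 2 + ε / 2 := add_lt_add h1 h2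
      _ = ε := add_halves ε

end Partition

/-! ### Ultrafilter pigeonhole -/

lemma ultra_pigeonhole {α β : Type*} (𝒰 : Ultrafilter α) {S : Set β} (hS : S.Finite)
    {f : α → β} (hf : {n | f n ∈ S} ∈ 𝒰) : ∃ b ∈ S, {n | f n = b} ∈ 𝒰 := by
  by_contra hcon
  push_neg at hcon
  have hc : ∀ b ∈ S, {n | f n ≠ b} ∈ 𝒰 := by
    intro b hb
    exact Ultrafilter.compl_mem_iff_notMem.mpr (hcon b hb)
  have hint : (⋂ b ∈ S, {n | f n ≠ b}) ∈ 𝒰 := (Filter.biInter_mem hS).mpr hc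
  obtain ⟨n, hn1, hn2⟩ := Filter.nonempty_of_mem (Filter.inter_mem hf hint)
  simp only [Set.mem_iInter, Set.mem_setOf_eq] at hn2
  exact hn2 (f n) hn1 rfl

end DistalPOTP

open DistalPOTP Pointwise Filter Topology in
/-- Every distal action of an infinite finitely generated group on the Cantor space has the
pseudo-orbit tracing property. -/
theorem distal_action_on_cantor_potp
    {G X : Type*} [Group G] [Infinite G] [MetricSpace X] [CompactSpace X]
    [TotallyDisconnectedSpace X] [Nonempty X]
    (hperfect : ∀ x : X, (nhdsWithin x {x}ᶜ).NeBot)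
    (A : Finset G) (hAgen : Subgroup.closure (A : Set G) = ⊤)
    (T : G → X → X) (hT : IsContAction T)
    (hdistal : ∀ x y : X, x ≠ y → ∃ c > (0 : ℝ), ∀ g : G, c ≤ dist (T g x) (T g y)) :
    POTPWrt T (A : Set G) := by
  classical
  obtain ⟨hTc, hT1, hTm⟩ := hT
  -- the product action on `X × X`
  set Φ : G → X × X → X × X := fun g p => (T g p.1, T g p.2) with hΦdef
  have hΦc : ∀ g, Continuous (Φ g) := fun g =>
    ((hTc g).comp continuous_fst).prodMk ((hTc g).comp continuous_snd)
  have hΦ1 : ∀ p, Φ 1 p = p := fun p => by simp [hΦdef, hT1]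
  have hΦm : ∀ g h p, Φ (g * h) p = Φ g (Φ h p) := fun g h p => by simp [hΦdef, hTm]
  have hΦd : ∀ p q : X × X, (∀ ε > (0:ℝ), ∃ g, dist (Φ g p) (Φ g q) < ε) → p = q := by
    intro p q hpq
    by_contra hne
    have hco : p.1 ≠ q.1 ∨ p.2 ≠ q.2 := by
      by_contra hco
      push_neg at hco
      exact hne (Prod.ext hco.1 hco.2)
    rcases hco with hco | hco
    · obtain ⟨c, hc, hcd⟩ := hdistal _ _ hco
      obtain ⟨g, hg⟩ := hpq c hc
      have hle : dist (T g p.1) (T g q.1) ≤ dist (Φ g p) (Φ g q) := by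
        rw [hΦdef, Prod.dist_eq]
        exact le_max_left _ _
      linarith [hcd g]
    · obtain ⟨c, hc, hcd⟩ := hdistal _ _ hco
      obtain ⟨g, hg⟩ := hpq c hc
      have hle : dist (T g p.2) (T g q.2) ≤ dist (Φ g p) (Φ g q) := by
        rw [hΦdef, Prod.dist_eq]
        exact le_max_right _ _
      linarith [hcd g]
  intro ε hε
  obtain ⟨E, hEq, hEclopen, hEdiam⟩ := DistalPOTP.exists_clopen_equiv (X := X) ε hε
  set W : G → Set (X × X) := fun w => {p : X × X | E (T w p.1) (T w p.2)} with hWdef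
  have hWclopen : ∀ w, IsClopen (W w) := fun w =>
    hEclopen.preimage (((hTc w).comp continuous_fst).prodMk ((hTc w).comp continuous_snd))
  -- Part 1: agreement of codes on a large ball implies agreement everywhere
  have part1 : ∃ r : ℕ, ∀ x y : X, (∀ h ∈ S0 A ^ r, E (T h x) (T h y)) →
      ∀ g : G, E (T g x) (T g y) := by
    by_contra hcon
    push_neg at hcon
    choose xx yy hag hdis using hcon
    have hPex : ∀ n : ℕ, ∃ m : ℕ, ∃ g ∈ S0 A ^ m, ¬ E (T g (xx n)) (T g (yy n)) := by
      intro n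
      obtain ⟨g, hg⟩ := hdis n
      obtain ⟨m, hm⟩ := exists_S0_pow_mem hAgen g
      exact ⟨m, g, hm, hg⟩
    set L : ℕ → ℕ := fun n => Nat.find (hPex n) with hLdef
    have hLspec : ∀ n, ∃ g ∈ S0 A ^ (L n), ¬ E (T g (xx n)) (T g (yy n)) :=
      fun n => Nat.find_spec (hPex n)
    have hLmin : ∀ n m, m < L n → ∀ g ∈ S0 A ^ m, E (T g (xx n)) (T g (yy n)) := by
      intro n m hm g hg
      by_contra hne
      exact (Nat.find_min (hPex n) hm) ⟨g, hg, hne⟩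
    have hLn : ∀ n, n < L n := by
      intro n
      by_contra hle
      push_neg at hle
      obtain ⟨g, hg, hne⟩ := hLspec n
      exact hne (hag n g (S0_pow_mono A hle hg))
    choose gg hgg hggne using hLspec
    have hu : ∀ n k, k ≤ L n → ∃ u ∈ S0 A ^ k, u * gg n ∈ S0 A ^ (L n - k) :=
      fun n k hk => S0_decomp (hgg n) k hk
    set u : ℕ → ℕ → G := fun n k => if h : k ≤ L n then (hu n k h).choose else 1 with hudef
    have humem : ∀ n k, (h : k ≤ L n) →
        u n k ∈ S0 A ^ k ∧ u n k * gg n ∈ S0 A ^ (L n - k) := by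
      intro n k h
      have : u n k = (hu n k h).choose := by rw [hudef]; simp only [dif_pos h]
      rw [this]
      obtain ⟨h1, h2⟩ := (hu n k h).choose_spec
      exact ⟨h1, h2⟩
    obtain ⟨𝒰, h𝒰⟩ := Ultrafilter.exists_le (atTop : Filter ℕ)
    set pp : ℕ → X × X := fun n => (T (gg n) (xx n), T (gg n) (yy n)) with hppdef
    obtain ⟨P, -, hPle⟩ := isCompact_univ.ultrafilter_le_nhds (𝒰.map pp)
      (le_principal_iff.mpr Filter.univ_mem)
    have hPtend : Filter.Tendsto pp 𝒰 (𝓝 P) := by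
      have := Ultrafilter.coe_map pp 𝒰
      exact Filter.Tendsto.mono_right (le_of_eq this.symm) hPle
    have hvex : ∀ k : ℕ, ∃ v ∈ S0 A ^ k, {n | u n k = v} ∈ 𝒰 := by
      intro k
      apply ultra_pigeonhole 𝒰 (S0_pow_finite A k)
      have hsub : {n : ℕ | k ≤ n} ⊆ {n | u n k ∈ S0 A ^ k} := by
        intro n hn
        exact (humem n k (le_of_lt (lt_of_le_of_lt hn (hLn n)))).1
      exact Filter.mem_of_superset (h𝒰 (Filter.mem_atTop k)) hsub
    choose v hvmem hvU using hvex
    have claimb : ∀ k : ℕ, ∀ h ∈ S0 A ^ k,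
        E (T (h * v (k+1)) P.1) (T (h * v (k+1)) P.2) := by
      intro k h hh
      have hclosed : IsClosed (W (h * v (k+1))) := (hWclopen _).isClosed
      have hP : P ∈ W (h * v (k+1)) := by
        refine hclosed.mem_of_tendsto hPtend ?_
        have hev : {n : ℕ | k + 1 ≤ n} ∩ {n | u n (k+1) = v (k+1)} ∈ 𝒰 :=
          Filter.inter_mem (h𝒰 (Filter.mem_atTop (k+1))) (hvU (k+1))
        refine Filter.mem_of_superset hev ?_
        rintro n ⟨hn1, hn2⟩
        have hk1 : k + 1 ≤ L n := le_of_lt (lt_of_le_of_lt hn1 (hLn n))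
        obtain ⟨hu1, hu2⟩ := humem n (k+1) hk1
        rw [hn2] at hu2
        show E (T (h * v (k+1)) (T (gg n) (xx n))) (T (h * v (k+1)) (T (gg n) (yy n)))
        rw [← hTm, ← hTm]
        apply hLmin n (L n - 1) (by omega)
        have heq : h * v (k+1) * gg n = h * (v (k+1) * gg n) := by rw [mul_assoc]
        rw [heq]
        have hmm := Set.mul_mem_mul hh hu2
        rw [← pow_add] at hmm
        exact S0_pow_mono A (by omega) hmm
      exact hP
    have claima : ¬ E P.1 P.2 := by
      have hclosed : IsClosed {p : X × X | ¬ E (T 1 p.1) (T 1 p.2)} := (hWclopen 1).compl.isClosed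
      have hP := hclosed.mem_of_tendsto hPtend (Filter.Eventually.of_forall (fun n => by
        show ¬ E (T 1 (pp n).1) (T 1 (pp n).2)
        rw [hT1, hT1]
        exact hggne n))
      intro hE
      apply hP
      show E (T 1 P.1) (T 1 P.2)
      rwa [hT1, hT1]
    set qq : ℕ → X × X := fun k => Φ (v (k+1)) P with hqqdef
    obtain ⟨Q, -, hQle⟩ := isCompact_univ.ultrafilter_le_nhds (𝒰.map qq)
      (le_principal_iff.mpr Filter.univ_mem)
    have hQtend : Filter.Tendsto qq 𝒰 (𝓝 Q) := by
      have := Ultrafilter.coe_map qq 𝒰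
      exact Filter.Tendsto.mono_right (le_of_eq this.symm) hQle
    have claimc : ∀ g : G, E (T g Q.1) (T g Q.2) := by
      intro g
      obtain ⟨m, hm⟩ := exists_S0_pow_mem hAgen g
      have hclosed : IsClosed (W g) := (hWclopen g).isClosed
      have hQW : Q ∈ W g := by
        refine hclosed.mem_of_tendsto hQtend ?_
        refine Filter.mem_of_superset (h𝒰 (Filter.mem_atTop m)) ?_
        intro k hk
        show E (T g (T (v (k+1)) P.1)) (T g (T (v (k+1)) P.2))
        rw [← hTm, ← hTm]
        exact claimb k g (S0_pow_mono A hk hm)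
      exact hQW
    have hQorb : Q ∈ closure (Set.range fun g => Φ g P) :=
      mem_closure_of_tendsto hQtend (Filter.Eventually.of_forall fun k => ⟨v (k+1), rfl⟩)
    have hPorb := ap_lemma hΦc hΦ1 hΦm hΦd hQorb
    have hR'closed : IsClosed {p : X × X | ∀ g : G, E (T g p.1) (T g p.2)} := by
      have heq : {p : X × X | ∀ g : G, E (T g p.1) (T g p.2)} = ⋂ g, W g := by
        ext p
        simp [hWdef]
      rw [heq]
      exact isClosed_iInter (fun g => (hWclopen g).isClosed)
    have hrange : (Set.range fun g => Φ g Q) ⊆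
        {p : X × X | ∀ g : G, E (T g p.1) (T g p.2)} := by
      rintro _ ⟨g, rfl⟩ g'
      show E (T g' (T g Q.1)) (T g' (T g Q.2))
      rw [← hTm, ← hTm]
      exact claimc (g' * g)
    have hPin := (closure_minimal hrange hR'closed) hPorb
    have h1P := hPin 1
    rw [hT1, hT1] at h1P
    exact claima h1P
  obtain ⟨r, hr⟩ := part1
  -- Part 2: uniformity
  have part2 : ∃ δ > (0:ℝ), ∀ x y : X, dist x y < δ →
      ∀ h ∈ S0 A ^ r, E (T h x) (T h y) := by
    by_contra hcon
    push_neg at hcon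
    have hseq : ∀ m : ℕ, ∃ x y : X, dist x y < 1/((m:ℝ)+1) ∧
        ∃ h ∈ S0 A ^ r, ¬ E (T h x) (T h y) := by
      intro m
      obtain ⟨x, y, h1, h2⟩ := hcon (1/((m:ℝ)+1)) (by positivity)
      exact ⟨x, y, h1, h2⟩
    choose xx yy hdst hWx using hseq
    choose hh hhmem hhne using hWx
    obtain ⟨𝒰, h𝒰⟩ := Ultrafilter.exists_le (atTop : Filter ℕ)
    obtain ⟨z, -, hzle⟩ := isCompact_univ.ultrafilter_le_nhds (𝒰.map xx)
      (le_principal_iff.mpr Filter.univ_mem)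
    have hxt : Filter.Tendsto xx 𝒰 (𝓝 z) := by
      have := Ultrafilter.coe_map xx 𝒰
      exact Filter.Tendsto.mono_right (le_of_eq this.symm) hzle
    have hdist0 : Filter.Tendsto (fun m => dist (xx m) (yy m)) 𝒰 (𝓝 0) := by
      apply squeeze_zero (fun m => dist_nonneg) (fun m => le_of_lt (hdst m))
      exact tendsto_one_div_add_atTop_nhds_zero_nat.mono_left h𝒰
    have hyt : Filter.Tendsto yy 𝒰 (𝓝 z) := hxt.congr_dist hdist0
    obtain ⟨h0, h0mem, h0U⟩ := ultra_pigeonhole 𝒰 (S0_pow_finite A r) (f := hh)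
      (Filter.univ_mem' (fun m => hhmem m))
    have hclosed : IsClosed ((W h0)ᶜ) := (hWclopen h0).compl.isClosed
    have hpt : Filter.Tendsto (fun m => (xx m, yy m)) 𝒰 (𝓝 (z, z)) := hxt.prodMk_nhds hyt
    have hzz : (z, z) ∈ (W h0)ᶜ := by
      refine hclosed.mem_of_tendsto hpt ?_
      refine Filter.mem_of_superset h0U ?_
      intro m hm
      show ¬ E (T h0 (xx m)) (T h0 (yy m))
      rw [← hm]
      exact hhne m
    exact hzz (hEq.refl (T h0 z))
  obtain ⟨δ, hδ, hδkey⟩ := part2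
  have key : ∀ a b : X, dist a b < δ → ∀ g : G, E (T g a) (T g b) :=
    fun a b hab => hr a b (hδkey a b hab)
  refine ⟨δ, hδ, ?_⟩
  intro x hx
  -- the relation R
  set R : X → X → Prop := fun a b => ∀ g : G, E (T g a) (T g b) with hRdef
  have hRrefl : ∀ a, R a a := fun a g => hEq.refl _
  have hRsymm : ∀ {a b}, R a b → R b a := fun h g => hEq.symm (h g)
  have hRtrans : ∀ {a b c}, R a b → R b c → R a c := fun h1 h2 g => hEq.trans (h1 g) (h2 g)
  have hRinv : ∀ {a b} (g : G), R a b → R (T g a) (T g b) := by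
    intro a b g hab g'
    show E (T g' (T g a)) (T g' (T g b))
    rw [← hTm, ← hTm]
    exact hab (g' * g)
  -- the set of good group elements
  set Good : Set G := {g | R (T g (x 1)) (x g)} with hGooddef
  have h1G : (1:G) ∈ Good := by
    show R (T 1 (x 1)) (x 1)
    rw [hT1]
    exact hRrefl _
  have hstep : ∀ a ∈ A, ∀ g ∈ Good, a * g ∈ Good := by
    intro a ha g hg
    show R (T (a * g) (x 1)) (x (a * g))
    have c1 : R (T a (T g (x 1))) (T a (x g)) := hRinv a hg
    have c2 : R (T a (x g)) (x (a * g)) := key _ _ (hx a ha g)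
    have c3 := hRtrans c1 c2
    rwa [← hTm] at c3
  have hstepinv : ∀ a ∈ A, ∀ g ∈ Good, a⁻¹ * g ∈ Good := by
    intro a ha g hg
    show R (T (a⁻¹ * g) (x 1)) (x (a⁻¹ * g))
    have c2 : R (T a (x (a⁻¹ * g))) (x (a * (a⁻¹ * g))) := key _ _ (hx a ha (a⁻¹ * g))
    have e1 : a * (a⁻¹ * g) = g := by group
    rw [e1] at c2
    have c3 : R (T a (x (a⁻¹ * g))) (T g (x 1)) := hRtrans c2 (hRsymm hg)
    have c4 := hRinv a⁻¹ c3
    have e2 : T a⁻¹ (T a (x (a⁻¹ * g))) = x (a⁻¹ * g) := by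
      rw [← hTm, inv_mul_cancel, hT1]
    have e3 : T a⁻¹ (T g (x 1)) = T (a⁻¹ * g) (x 1) := by rw [← hTm]
    rw [e2, e3] at c4
    exact hRsymm c4
  -- completeness of Good via a subgroup
  set K : Subgroup G :=
    { carrier := {g | ∀ h ∈ Good, g * h ∈ Good ∧ g⁻¹ * h ∈ Good}
      one_mem' := by
        intro h hh
        constructor
        · simpa using hh
        · simpa using hh
      mul_mem' := by
        intro a b ha hb h hh
        constructor
        · have hx1 := (ha (b * h) ((hb h hh).1)).1
          rwa [← mul_assoc] at hx1
        · have hx1 := (hb (a⁻¹ * h) ((ha h hh).2)).2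
          rw [mul_inv_rev]
          rwa [← mul_assoc] at hx1
      inv_mem' := by
        intro a ha h hh
        constructor
        · exact (ha h hh).2
        · rw [inv_inv]
          exact (ha h hh).1 } with hKdef
  have hAK : (A : Set G) ⊆ (K : Set G) := by
    intro a ha h hh
    exact ⟨hstep a ha h hh, hstepinv a ha h hh⟩
  have hKtop : ∀ g : G, ∀ h ∈ Good, g * h ∈ Good ∧ g⁻¹ * h ∈ Good := by
    have hle := (Subgroup.closure_le K).mpr hAK
    rw [hAgen] at hle
    intro g
    exact hle (Subgroup.mem_top g)
  have hGoodAll : ∀ g : G, g ∈ Good := by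
    intro g
    have h2 := (hKtop g 1 h1G).1
    rwa [mul_one] at h2
  refine ⟨x 1, ?_⟩
  intro g
  have hg := hGoodAll g 1
  rw [hT1, hT1] at hg
  exact hEdiam _ _ hg
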